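/- Let T be a tree on n vertices with a perfect matching given by the edge set M, where n/2 is odd, and suppose T admits a strong graceful labelling. Then the permutation g₂ = (0 n−2)(1 n−1)⋯(n/2−3 n/2+1)(n/2−2 n/2+2) of {0, 1, …, n − 1}, which fixes n/2 − 1 and n/2 and sends every other even label 2k to n − 2 − 2k and every other odd label 2k+1 to n − 1 − 2k, is a generalised strongly graceful permutation of T. -/
import Mathlib


open SimpleGraph

/-- A graceful labelling of a graph `G` with `m` edges: an injective function
`f` from the vertices into `{0, 1, …, m}` such that the induced edge labels
`|f u − f v|` are pairwise distinct over the edges. -/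
def IsGracefulLabeling {V : Type} (G : SimpleGraph V) (f : V → ℕ) : Prop :=
  Function.Injective f ∧ (∀ v, f v ≤ G.edgeSet.ncard) ∧
  ∀ u v x y : V, G.Adj u v → G.Adj x y →
    Nat.dist (f u) (f v) = Nat.dist (f x) (f y) → s(u, v) = s(x, y)

/-- A strong graceful labelling of `G` on `n` vertices with respect to a matching `M`:
a graceful labelling such that `f x + f y = n - 1` for every edge `xy ∈ M`. -/
def IsStrongGracefulLabeling {V : Type} [Fintype V] (G : SimpleGraph V)
    (M : G.Subgraph) (f : V → ℕ) : Prop :=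
  IsGracefulLabeling G f ∧ ∀ x y : V, M.Adj x y → f x + f y = Fintype.card V - 1


/-- `g` is a generalised strongly graceful permutation of `G` (with matching `M`):
`g` permutes `{0, …, n-1}` and for every strong graceful labelling `f`,
the labelling `g ∘ f` is again a strong graceful labelling. -/
def IsGenStronglyGracefulPerm {V : Type} [Fintype V] (G : SimpleGraph V)
    (M : G.Subgraph) (g : ℕ → ℕ) : Prop :=
  Set.BijOn g (Set.Iio (Fintype.card V)) (Set.Iio (Fintype.card V)) ∧
  ∀ f : V → ℕ, IsStrongGracefulLabeling G M f → IsStrongGracefulLabeling G M (g ∘ f)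

set_option maxHeartbeats 1000000

def gsgAux (d : ℕ) : ℕ :=
  if d % 2 = 0 then d else if d % 4 = 1 then (if d = 1 then 1 else d - 2) else d + 2

lemma gsgAux_inj : Function.Injective gsgAux := by
  intro a b h
  unfold gsgAux at h
  split_ifs at h <;> omega

lemma card_filter_odd_range (n : ℕ) :
    ((Finset.range n).filter (fun x => x % 2 = 1)).card = n / 2 := by
  induction n with
  | zero => simp
  | succ n ih =>
    rw [Finset.range_add_one, Finset.filter_insert]
    split_ifs with h
    · rw [Finset.card_insert_of_notMem (by simp), ih]; omega
    · rw [ih]; omega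

lemma card_filter_even_range (n : ℕ) :
    ((Finset.range n).filter (fun x => x % 2 = 0)).card = n - n / 2 := by
  induction n with
  | zero => simp
  | succ n ih =>
    rw [Finset.range_add_one, Finset.filter_insert]
    split_ifs with h
    · rw [Finset.card_insert_of_notMem (by simp), ih]; omega
    · rw [ih]; omega

def edgeLabel {V : Type} (f : V → ℕ) : Sym2 V → ℕ :=
  Sym2.lift ⟨fun a b => Nat.dist (f a) (f b), fun a b => Nat.dist_comm (f a) (f b)⟩

@[simp] lemma edgeLabel_mk {V : Type} (f : V → ℕ) (a b : V) :
    edgeLabel f s(a, b) = Nat.dist (f a) (f b) := rfl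

lemma nat_dist_eq (a b : ℕ) : Nat.dist a b = a - b + (b - a) := rfl

lemma gsg_key_match (n a b : ℕ) (hn4 : n % 4 = 2) (h1 : a ≤ n - 1) (h2 : b ≤ n - 1)
    (hsum : a + b = n - 1) :
    Nat.dist (if Even a then n - 2 - a else n - a) (if Even b then n - 2 - b else n - b)
      = gsgAux (Nat.dist a b) := by
  have hd : Nat.dist a b % 2 = 1 := by rw [nat_dist_eq]; omega
  rcases Nat.even_or_odd a with ha | ha
  · rw [Nat.even_iff] at ha
    have hb : ¬ Even b := by rw [Nat.even_iff]; omega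
    rw [if_pos (Nat.even_iff.mpr ha), if_neg hb]
    rw [Nat.even_iff] at hb; push_neg at hb
    replace hb : b % 2 = 1 := by omega
    unfold gsgAux
    rw [nat_dist_eq, nat_dist_eq]
    split_ifs <;> omega
  · rw [Nat.odd_iff] at ha
    have hb : Even b := by rw [Nat.even_iff]; omega
    rw [if_neg (by rw [Nat.even_iff]; omega), if_pos hb]
    rw [Nat.even_iff] at hb
    unfold gsgAux
    rw [nat_dist_eq, nat_dist_eq]
    split_ifs <;> omega

lemma gsg_key_same (n a b : ℕ) (hn2 : n % 2 = 0) (h1 : a ≤ n - 1) (h2 : b ≤ n - 1)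
    (hpar : a % 2 = b % 2) :
    Nat.dist (if Even a then n - 2 - a else n - a) (if Even b then n - 2 - b else n - b)
      = gsgAux (Nat.dist a b) := by
  rcases Nat.even_or_odd a with ha | ha
  · rw [Nat.even_iff] at ha
    have hb : Even b := by rw [Nat.even_iff]; omega
    rw [if_pos (Nat.even_iff.mpr ha), if_pos hb]
    rw [Nat.even_iff] at hb
    unfold gsgAux
    rw [nat_dist_eq, nat_dist_eq]
    split_ifs <;> omega
  · rw [Nat.odd_iff] at ha
    have hb : ¬ Even b := by rw [Nat.even_iff]; omega
    rw [if_neg (by rw [Nat.even_iff]; omega), if_neg hb]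
    rw [Nat.even_iff] at hb; push_neg at hb
    replace hb : b % 2 = 1 := by omega
    unfold gsgAux
    rw [nat_dist_eq, nat_dist_eq]
    split_ifs <;> omega

lemma gsg_key_sum (n a b : ℕ) (hn4 : n % 4 = 2) (hsum : a + b = n - 1) :
    (if Even a then n - 2 - a else n - a) + (if Even b then n - 2 - b else n - b) = n - 1 := by
  rcases Nat.even_or_odd a with ha | ha
  · rw [Nat.even_iff] at ha
    have hb : ¬ Even b := by rw [Nat.even_iff]; omega
    rw [if_pos (Nat.even_iff.mpr ha), if_neg hb]
    rw [Nat.even_iff] at hb; omega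
  · rw [Nat.odd_iff] at ha
    have hb : Even b := by rw [Nat.even_iff]; omega
    rw [if_neg (by rw [Nat.even_iff]; omega), if_pos hb]
    rw [Nat.even_iff] at hb; omega


/-- When `n / 2` is odd, the permutation `g₂ = (0 n-2)(1 n-1)⋯(n/2-3 n/2+1)(n/2-2 n/2+2)`,
which fixes `n/2 - 1` and `n/2` and sends every other even label `b` to `n - 2 - b` and
every other odd label `b` to `n - b` (note that the formulas `b ↦ n - 2 - b` for even `b`
and `b ↦ n - b` for odd `b` automatically fix `n/2 - 1` and `n/2` when `n/2` is odd),
is a generalised strongly graceful permutation of a strongly graceful tree `T` on `n`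
vertices. -/
theorem g2_genStronglyGracefulPerm_of_odd {V : Type} [Fintype V] (G : SimpleGraph V)
    (hT : G.IsTree) (hhalf : Odd (Fintype.card V / 2))
    (M : G.Subgraph) (hM : M.IsPerfectMatching)
    (hex : ∃ f : V → ℕ, IsStrongGracefulLabeling G M f) :
    IsGenStronglyGracefulPerm G M
      (fun b => if Even b then Fintype.card V - 2 - b else Fintype.card V - b) := by
  classical
  set n := Fintype.card V with hn
  have hne : n % 2 = 0 := Nat.even_iff.mp hM.even_card
  have hn4 : n % 4 = 2 := by
    obtain ⟨k, hk⟩ := hhalf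
    omega
  have hn2 : 2 ≤ n := by omega
  -- Part 1: bijectivity of g₂ on {0, …, n-1}
  have hmaps : Set.MapsTo (fun b => if Even b then n - 2 - b else n - b)
      (Set.Iio n) (Set.Iio n) := by
    intro b hb
    simp only [Set.mem_Iio] at *
    simp only [Nat.even_iff]
    split_ifs with h <;> omega
  have hinv : ∀ b ∈ Set.Iio n,
      (fun b => if Even b then n - 2 - b else n - b)
        ((fun b => if Even b then n - 2 - b else n - b) b) = b := by
    intro b hb
    simp only [Set.mem_Iio] at hb
    simp only [Nat.even_iff]
    split_ifs with h1 h2 h2 <;> omega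
  have hbij : Set.BijOn (fun b => if Even b then n - 2 - b else n - b)
      (Set.Iio n) (Set.Iio n) :=
    Set.InvOn.bijOn ⟨fun b hb => hinv b hb, fun b hb => hinv b hb⟩ hmaps hmaps
  refine ⟨hbij, ?_⟩
  intro f hf
  obtain ⟨⟨hfinj, hfbd, hfdist⟩, hfmatch⟩ := hf
  have hE : G.edgeFinset.card = n - 1 := by
    have := hT.card_edgeFinset; omega
  have hnc : G.edgeSet.ncard = n - 1 := by
    rw [Set.ncard_eq_toFinset_card', Set.toFinset_card, ← SimpleGraph.edgeFinset_card]
    exact hE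
  have hfb : ∀ v, f v ≤ n - 1 := fun v => hnc ▸ hfbd v
  -- the image of f is all of range n
  have himg : Finset.image f Finset.univ = Finset.range n := by
    apply Finset.eq_of_subset_of_card_le
    · intro x hx
      obtain ⟨v, -, rfl⟩ := Finset.mem_image.mp hx
      exact Finset.mem_range.mpr (by have := hfb v; omega)
    · rw [Finset.card_range, Finset.card_image_of_injective _ hfinj, Finset.card_univ]
  -- matching partner function
  have hpm := SimpleGraph.Subgraph.isPerfectMatching_iff.mp hM
  choose p hp hup using hpm
  -- matching edge finset
  set MF : Finset (Sym2 V) := (Set.toFinite M.edgeSet).toFinset with hMF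
  have hMFmem : ∀ e, e ∈ MF ↔ e ∈ M.edgeSet := fun e => Set.Finite.mem_toFinset _
  have hMFsub : MF ⊆ G.edgeFinset := by
    intro e he
    rw [SimpleGraph.mem_edgeFinset]
    exact M.edgeSet_subset ((hMFmem e).mp he)
  -- counting matching edges
  have hMFcard : MF.card = n / 2 := by
    have hbijc : (Finset.univ.filter (fun v => f v % 2 = 0)).card = MF.card := by
      refine Finset.card_bij (fun v _ => s(v, p v)) ?_ ?_ ?_
      · intro v hv
        exact (hMFmem _).mpr (SimpleGraph.Subgraph.mem_edgeSet.mpr (hp v))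
      · intro a ha b hb hab
        rw [Sym2.eq_iff] at hab
        rcases hab with ⟨h1, -⟩ | ⟨h1, h2⟩
        · exact h1
        · exfalso
          simp only [Finset.mem_filter] at ha hb
          have hsum := hfmatch b (p b) (hp b)
          have : f a = f (p b) := by rw [h1]
          omega
      · intro e he
        rw [hMFmem] at he
        induction e using Sym2.ind with
        | _ x y =>
          have hxy : M.Adj x y := SimpleGraph.Subgraph.mem_edgeSet.mp he
          have hsum := hfmatch x y hxy
          by_cases hx : f x % 2 = 0
          · refine ⟨x, Finset.mem_filter.mpr ⟨Finset.mem_univ _, hx⟩, ?_⟩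
            show s(x, p x) = s(x, y)
            rw [← hup x y hxy]
          · refine ⟨y, Finset.mem_filter.mpr ⟨Finset.mem_univ _, by omega⟩, ?_⟩
            show s(y, p y) = s(x, y)
            rw [← hup y x hxy.symm, Sym2.eq_swap]
    have himgf : (Finset.univ.filter (fun v => f v % 2 = 0)).image f
        = (Finset.range n).filter (fun x => x % 2 = 0) := by
      rw [← himg]
      exact (Finset.filter_image (p := fun x => x % 2 = 0)).symm
    have hc1 : (Finset.univ.filter (fun v => f v % 2 = 0)).card
        = ((Finset.range n).filter (fun x => x % 2 = 0)).card := by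
      rw [← himgf, Finset.card_image_of_injective _ hfinj]
    have hc2 : ((Finset.range n).filter (fun x => x % 2 = 0)).card = n - n / 2 :=
      card_filter_even_range n
    omega
  -- injectivity of the label map on edges
  have hLinjOn : Set.InjOn (edgeLabel f) ↑G.edgeFinset := by
    intro e1 h1 e2 h2 h12
    induction e1 using Sym2.ind with
    | _ u v =>
      induction e2 using Sym2.ind with
      | _ x y =>
        simp only [Finset.mem_coe, SimpleGraph.mem_edgeFinset, SimpleGraph.mem_edgeSet] at h1 h2
        exact hfdist u v x y h1 h2 (by simpa using h12)
  -- matching edges carry exactly the odd labels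
  have hImgM : MF.image (edgeLabel f) = (Finset.range n).filter (fun x => x % 2 = 1) := by
    apply Finset.eq_of_subset_of_card_le
    · intro x hx
      obtain ⟨e, he, rfl⟩ := Finset.mem_image.mp hx
      rw [hMFmem] at he
      induction e using Sym2.ind with
      | _ a b =>
        have hab : M.Adj a b := SimpleGraph.Subgraph.mem_edgeSet.mp he
        have hsum := hfmatch a b hab
        have h1 := hfb a; have h2 := hfb b
        simp only [edgeLabel_mk, Finset.mem_filter, Finset.mem_range, nat_dist_eq]
        omega
    · rw [card_filter_odd_range,
        Finset.card_image_of_injOn (hLinjOn.mono (Finset.coe_subset.mpr hMFsub)), hMFcard]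
  -- endpoints of non-matching edges have equal parity
  have hparity : ∀ u v, G.Adj u v → ¬ M.Adj u v → f u % 2 = f v % 2 := by
    intro u v ha hm
    by_contra hne'
    have hd : edgeLabel f s(u, v) ∈ (Finset.range n).filter (fun x => x % 2 = 1) := by
      have h1 := hfb u; have h2 := hfb v
      simp only [edgeLabel_mk, Finset.mem_filter, Finset.mem_range, nat_dist_eq]
      omega
    rw [← hImgM] at hd
    obtain ⟨e, heM, heq⟩ := Finset.mem_image.mp hd
    have heq2 : e = s(u, v) :=
      hLinjOn (Finset.mem_coe.mpr (hMFsub heM))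
        (Finset.mem_coe.mpr (SimpleGraph.mem_edgeFinset.mpr ha)) heq
    rw [heq2, hMFmem] at heM
    exact hm (SimpleGraph.Subgraph.mem_edgeSet.mp heM)
  -- key: the new labels are gsgAux of the old labels
  have key : ∀ a b : V, G.Adj a b →
      Nat.dist ((if Even (f a) then n - 2 - f a else n - f a))
        ((if Even (f b) then n - 2 - f b else n - f b))
      = gsgAux (Nat.dist (f a) (f b)) := by
    intro a b hab
    by_cases hm : M.Adj a b
    · exact gsg_key_match n (f a) (f b) hn4 (hfb a) (hfb b) (hfmatch a b hm)
    · exact gsg_key_same n (f a) (f b) hne (hfb a) (hfb b) (hparity a b hab hm)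
  refine ⟨⟨?_, ?_, ?_⟩, ?_⟩
  · -- injectivity of g ∘ f
    intro a b hab
    refine hfinj (hbij.injOn ?_ ?_ hab)
    · simp only [Set.mem_Iio]; have := hfb a; omega
    · simp only [Set.mem_Iio]; have := hfb b; omega
  · -- bound
    intro v
    rw [hnc]
    have := hfb v
    simp only [Function.comp_apply]
    rcases Nat.even_or_odd (f v) with hv | hv
    · rw [if_pos hv]; omega
    · rw [Nat.odd_iff] at hv
      rw [if_neg (by rw [Nat.even_iff]; omega)]
      omega
  · -- distinct labels
    intro u v x y huv hxy hd
    simp only [Function.comp_apply] at hd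
    rw [key u v huv, key x y hxy] at hd
    exact hfdist u v x y huv hxy (gsgAux_inj hd)
  · -- matching sums
    intro x y hm
    simp only [Function.comp_apply]
    exact gsg_key_sum n (f x) (f y) hn4 (hfmatch x y hm)
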